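/- (Lipschitz property) Consider the local search allocation with a fixed deterministic tie-breaking rule given by permutations {ξ_v} of the neighbors of each vertex v. Let X^(k) be the load vector after allocating k balls with birthplaces u_1,...,u_k, and Y^(k) the load vector after allocating k balls with birthplaces u_1,...,u_{i-1}, u_i', u_{i+1},...,u_k (only the i-th birthplace changed). Then Σ_{v ∈ V} |X_v^(k) − Y_v^(k)| ≤ 2. -/

import Mathlib

set_option linter.unusedSectionVars false
set_option maxHeartbeats 1000000


open Finset

variable {V : Type*} [Fintype V] [DecidableEq V]

/-- One step of the local search from `u` with current loads `x`:
among the neighbors of `u` (listed in the tie-breaking order `ξ u`) that have load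
strictly smaller than `x u`, move to the first one of minimal load; if there is no
such neighbor, stay at `u` (i.e. `u` is a local minimum). -/
def lsNext (G : SimpleGraph V) [DecidableRel G.Adj] (ξ : V → List V)
    (x : V → ℕ) (u : V) : V :=
  ((((ξ u).filter (fun w => decide (G.Adj u w ∧ x w < x u)))).argmin x).getD u

/-- Iterate the local search for at most `n` steps (stopping at a local minimum). -/
def lsIter (G : SimpleGraph V) [DecidableRel G.Adj] (ξ : V → List V)
    (x : V → ℕ) : ℕ → V → V
  | 0, u => u
  | n + 1, u => if lsNext G ξ x u = u then u else lsIter G ξ x n (lsNext G ξ x u)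

/-- The vertex where a ball born at `u` is placed: since each local-search step strictly
decreases the load, `x u` steps always suffice to reach a local minimum. -/
def lsPlace (G : SimpleGraph V) [DecidableRel G.Adj] (ξ : V → List V)
    (x : V → ℕ) (u : V) : V :=
  lsIter G ξ x (x u) u

/-- Add one ball born at `u` to the load vector `x`. -/
def lsAdd (G : SimpleGraph V) [DecidableRel G.Adj] (ξ : V → List V)
    (x : V → ℕ) (u : V) : V → ℕ :=
  fun v => x v + if v = lsPlace G ξ x u then 1 else 0

/-- The load vector after allocating the balls with birthplaces `bs` (in order) by
local search allocation with the deterministic tie-breaking rule `ξ`. -/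
def lsLoads (G : SimpleGraph V) [DecidableRel G.Adj] (ξ : V → List V)
    (bs : List V) : V → ℕ :=
  bs.foldl (lsAdd G ξ) (fun _ => 0)

section Helpers

variable (G : SimpleGraph V) [DecidableRel G.Adj] (ξ : V → List V)

lemma mem_lsFilter {x : V → ℕ} {u n : V} :
    n ∈ (ξ u).filter (fun w => decide (G.Adj u w ∧ x w < x u)) ↔
      n ∈ ξ u ∧ G.Adj u n ∧ x n < x u := by
  simp [List.mem_filter]

lemma lsNext_ne_imp {x : V → ℕ} {u : V} (h : lsNext G ξ x u ≠ u) :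
    lsNext G ξ x u ∈ ξ u ∧ G.Adj u (lsNext G ξ x u) ∧ x (lsNext G ξ x u) < x u := by
  classical
  unfold lsNext at h ⊢
  cases harg : ((ξ u).filter (fun w => decide (G.Adj u w ∧ x w < x u))).argmin x with
  | none => rw [harg] at h; simp at h
  | some m =>
    simp only [Option.getD_some]
    have : m ∈ (ξ u).filter (fun w => decide (G.Adj u w ∧ x w < x u)) :=
      List.argmin_mem (by rw [harg]; rfl)
    exact (mem_lsFilter G ξ).1 this

lemma lsNext_eq_self {x : V → ℕ} {u : V} (h : ∀ n, G.Adj u n → ¬ x n < x u) :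
    lsNext G ξ x u = u := by
  by_contra hne
  obtain ⟨_, hadj, hlt⟩ := lsNext_ne_imp G ξ hne
  exact h _ hadj hlt

lemma lsIter_fixed {x : V → ℕ} {u : V} (h : lsNext G ξ x u = u) :
    ∀ n, lsIter G ξ x n u = u := by
  intro n; cases n with
  | zero => rfl
  | succ k => simp [lsIter, h]

lemma lsNext_lsIter {x : V → ℕ} :
    ∀ (n : ℕ) (u : V), x u ≤ n → lsNext G ξ x (lsIter G ξ x n u) = lsIter G ξ x n u := by
  intro n
  induction n with
  | zero =>
    intro u hu
    have : lsIter G ξ x 0 u = u := rfl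
    rw [this]
    apply lsNext_eq_self
    intro n hadj hlt
    omega
  | succ k ih =>
    intro u hu
    by_cases h : lsNext G ξ x u = u
    · rw [lsIter_fixed G ξ h]; exact h
    · have hlt := (lsNext_ne_imp G ξ h).2.2
      have : lsIter G ξ x (k+1) u = lsIter G ξ x k (lsNext G ξ x u) := by
        simp [lsIter, h]
      rw [this]
      exact ih _ (by omega)

lemma lsIter_succ_of_le {x : V → ℕ} :
    ∀ (n : ℕ) (u : V), x u ≤ n → lsIter G ξ x (n+1) u = lsIter G ξ x n u := by
  intro n
  induction n with
  | zero =>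
    intro u hu
    have h : lsNext G ξ x u = u := by
      apply lsNext_eq_self; intro n hadj hlt; omega
    simp [lsIter, h]
  | succ k ih =>
    intro u hu
    by_cases h : lsNext G ξ x u = u
    · rw [lsIter_fixed G ξ h, lsIter_fixed G ξ h]
    · have hlt := (lsNext_ne_imp G ξ h).2.2
      show (if lsNext G ξ x u = u then u else lsIter G ξ x (k+1) (lsNext G ξ x u))
        = (if lsNext G ξ x u = u then u else lsIter G ξ x k (lsNext G ξ x u))
      rw [if_neg h, if_neg h]
      exact ih _ (by omega)

lemma lsIter_of_le {x : V → ℕ} {u : V} {n m : ℕ} (hn : x u ≤ n) (hnm : n ≤ m) :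
    lsIter G ξ x m u = lsIter G ξ x n u := by
  induction m with
  | zero =>
    have : n = 0 := by omega
    subst this; rfl
  | succ k ih =>
    rcases Nat.lt_or_ge n (k+1) with h | h
    · have hk : n ≤ k := by omega
      have hxk : x u ≤ k := le_trans hn hk
      rw [lsIter_succ_of_le G ξ k u hxk, ih hk]
    · have : n = k + 1 := by omega
      subst this; rfl

lemma lsPlace_localMin (hξ : ∀ v, (ξ v).Nodup ∧ ∀ w, w ∈ ξ v ↔ G.Adj v w)
    {x : V → ℕ} {u n : V} (hadj : G.Adj (lsPlace G ξ x u) n) :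
    x (lsPlace G ξ x u) ≤ x n := by
  have hfix : lsNext G ξ x (lsPlace G ξ x u) = lsPlace G ξ x u :=
    lsNext_lsIter G ξ (x u) u le_rfl
  by_contra hlt
  push_neg at hlt
  set p := lsPlace G ξ x u with hp
  have hmem : n ∈ (ξ p).filter (fun w => decide (G.Adj p w ∧ x w < x p)) :=
    (mem_lsFilter G ξ).2 ⟨(hξ p).2 n |>.2 hadj, hadj, hlt⟩
  have hne : (ξ p).filter (fun w => decide (G.Adj p w ∧ x w < x p)) ≠ [] := by
    intro h; rw [h] at hmem; simp at hmem
  cases harg : ((ξ p).filter (fun w => decide (G.Adj p w ∧ x w < x p))).argmin x with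
  | none => exact hne (List.argmin_eq_none.1 harg)
  | some m =>
    have hm : m ∈ (ξ p).filter (fun w => decide (G.Adj p w ∧ x w < x p)) :=
      List.argmin_mem (by rw [harg]; rfl)
    have hadjm : G.Adj p m := ((mem_lsFilter G ξ).1 hm).2.1
    have : lsNext G ξ x p = m := by unfold lsNext; rw [harg]; rfl
    rw [hfix] at this
    exact hadjm.ne' this.symm

end Helpers


lemma idxOf_filter_le_iff' {α : Type*} [DecidableEq α] :
    ∀ (L : List α), L.Nodup → ∀ (p : α → Bool) (m c : α), m ∈ L.filter p → c ∈ L.filter p →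
      ((L.filter p).idxOf m ≤ (L.filter p).idxOf c ↔ L.idxOf m ≤ L.idxOf c) := by
  intro L
  induction L with
  | nil => intro _ p m c hm; simp at hm
  | cons h t ih =>
    intro hnd p m c hm hc
    have hh : h ∉ t := (List.nodup_cons.1 hnd).1
    have ht : t.Nodup := (List.nodup_cons.1 hnd).2
    by_cases hp : p h = true
    · rw [List.filter_cons_of_pos hp] at hm hc ⊢
      by_cases hmh : m = h
      · rw [hmh]
        simp [List.idxOf_cons_self]
      · by_cases hch : c = h
        · rw [hch]
          have hmt : m ∈ t.filter p := by
            rcases List.mem_cons.1 hm with h' | h'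
            · exact absurd h' hmh
            · exact h'
          simp [List.idxOf_cons_self, List.idxOf_cons_ne _ (Ne.symm hmh)]
        · have hmt : m ∈ t.filter p := by
            rcases List.mem_cons.1 hm with h' | h'
            · exact absurd h' hmh
            · exact h'
          have hct : c ∈ t.filter p := by
            rcases List.mem_cons.1 hc with h' | h'
            · exact absurd h' hch
            · exact h'
          rw [List.idxOf_cons_ne _ (Ne.symm hmh), List.idxOf_cons_ne _ (Ne.symm hch),
            List.idxOf_cons_ne _ (Ne.symm hmh), List.idxOf_cons_ne _ (Ne.symm hch)]
          simpa [Nat.succ_le_succ_iff] using ih ht p m c hmt hct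
    · rw [List.filter_cons_of_neg (by simpa using hp)] at hm hc ⊢
      have hmh : m ≠ h := fun he => hh (he ▸ List.mem_of_mem_filter hm)
      have hch : c ≠ h := fun he => hh (he ▸ List.mem_of_mem_filter hc)
      rw [List.idxOf_cons_ne _ (Ne.symm hmh), List.idxOf_cons_ne _ (Ne.symm hch)]
      simpa [Nat.succ_le_succ_iff] using ih ht p m c hm hc

section Coupling
variable (G : SimpleGraph V) [DecidableRel G.Adj] (ξ : V → List V)
variable {x y : V → ℕ} {a b : V}

section
variable (hab : a ≠ b)
    (hxy : ∀ v, y v + (if v = a then 1 else 0) = x v + (if v = b then 1 else 0))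
    (ha : ∀ n, G.Adj a n → x a ≤ x n + 1)
    (hb : ∀ n, G.Adj b n → y b ≤ y n + 1)

include hab hxy

lemma couple_xa : x a = y a + 1 := by
  have := hxy a; simp [hab] at this; omega

lemma couple_yb : y b = x b + 1 := by
  have := hxy b; simp [Ne.symm hab] at this; omega

lemma couple_vv {v : V} (h1 : v ≠ a) (h2 : v ≠ b) : x v = y v := by
  have := hxy v; simp [h1, h2] at this; omega

include hb in
lemma couple_next_b : lsNext G ξ x b = b := by
  apply lsNext_eq_self
  intro n hadj
  have hnb : n ≠ b := hadj.ne'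
  have hyb := couple_yb hab hxy
  by_cases hna : n = a
  · subst hna
    have h1 := hb _ hadj
    have hxa := couple_xa hab hxy
    omega
  · have h1 := hb _ hadj
    have h2 := couple_vv hab hxy hna hnb
    omega

include ha in
lemma couple_next_a : lsNext G ξ y a = a := by
  apply lsNext_eq_self
  intro n hadj
  have hna : n ≠ a := hadj.ne'
  have hxa := couple_xa hab hxy
  by_cases hnb : n = b
  · subst hnb
    have h1 := ha _ hadj
    have hyb := couple_yb hab hxy
    omega
  · have h1 := ha _ hadj
    have h2 := couple_vv hab hxy hna hnb
    omega

include ha hb in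
lemma couple_next (hξ : ∀ v, (ξ v).Nodup ∧ ∀ w, w ∈ ξ v ↔ G.Adj v w) (w : V) :
    lsNext G ξ x w = b ∨ lsNext G ξ y w = a ∨ lsNext G ξ x w = lsNext G ξ y w := by
  classical
  have hxa := couple_xa hab hxy
  have hyb := couple_yb hab hxy
  by_cases hwa : w = a
  · exact Or.inr (Or.inl (by rw [hwa]; exact couple_next_a G ξ hab hxy ha))
  by_cases hwb : w = b
  · exact Or.inl (by rw [hwb]; exact couple_next_b G ξ hab hxy hb)
  have hw : x w = y w := couple_vv hab hxy hwa hwb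
  set Px : V → Bool := fun n => decide (G.Adj w n ∧ x n < x w) with hPx
  set Py : V → Bool := fun n => decide (G.Adj w n ∧ y n < y w) with hPy
  have hNx : lsNext G ξ x w = (((ξ w).filter Px).argmin x).getD w := rfl
  have hNy : lsNext G ξ y w = (((ξ w).filter Py).argmin y).getD w := rfl
  have hmemx : ∀ n, n ∈ (ξ w).filter Px ↔ n ∈ ξ w ∧ G.Adj w n ∧ x n < x w := by
    intro n; simp [hPx, List.mem_filter]
  have hmemy : ∀ n, n ∈ (ξ w).filter Py ↔ n ∈ ξ w ∧ G.Adj w n ∧ y n < y w := by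
    intro n; simp [hPy, List.mem_filter]
  have hxyL : ∀ n, n ≠ a → n ≠ b → (n ∈ (ξ w).filter Px ↔ n ∈ (ξ w).filter Py) := by
    intro n h1 h2
    have := couple_vv hab hxy h1 h2
    rw [hmemx, hmemy, this, hw]
  have haL : a ∈ (ξ w).filter Px → a ∈ (ξ w).filter Py := by
    intro h
    obtain ⟨h1, h2, h3⟩ := (hmemx a).1 h
    exact (hmemy a).2 ⟨h1, h2, by omega⟩
  have hbL : b ∈ (ξ w).filter Py → b ∈ (ξ w).filter Px := by
    intro h
    obtain ⟨h1, h2, h3⟩ := (hmemy b).1 h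
    exact (hmemx b).2 ⟨h1, h2, by omega⟩
  cases hLy : ((ξ w).filter Py).argmin y with
  | none =>
    have hLyNil : (ξ w).filter Py = [] := List.argmin_eq_none.1 hLy
    cases hLx : ((ξ w).filter Px).argmin x with
    | none =>
      refine Or.inr (Or.inr ?_)
      rw [hNx, hNy, hLx, hLy]
    | some m =>
      have hm : m ∈ (ξ w).filter Px := List.argmin_mem (by rw [hLx]; rfl)
      have hmb : m = b := by
        by_contra hmb
        by_cases hma : m = a
        · have := haL (hma ▸ hm); rw [hLyNil] at this; simp at this
        · have := (hxyL m hma hmb).1 hm; rw [hLyNil] at this; simp at this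
      exact Or.inl (by rw [hNx, hLx]; simpa using hmb)
  | some c =>
    by_cases hca : c = a
    · exact Or.inr (Or.inl (by rw [hNy, hLy]; simpa using hca))
    have hcLy : c ∈ (ξ w).filter Py := List.argmin_mem (by rw [hLy]; rfl)
    have hcLx : c ∈ (ξ w).filter Px := by
      by_cases hcb : c = b
      · rw [hcb]; exact hbL (hcb ▸ hcLy)
      · exact (hxyL c hca hcb).2 hcLy
    cases hLx : ((ξ w).filter Px).argmin x with
    | none =>
      have : (ξ w).filter Px = [] := List.argmin_eq_none.1 hLx
      rw [this] at hcLx; simp at hcLx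
    | some m =>
      by_cases hmb : m = b
      · exact Or.inl (by rw [hNx, hLx]; simpa using hmb)
      obtain ⟨hmM, hminx, hidxx⟩ := List.argmin_eq_some_iff.1 hLx
      obtain ⟨hcM, hminy, hidxy⟩ := List.argmin_eq_some_iff.1 hLy
      have hxc_le_yc : x c ≤ y c := by
        by_cases hcb : c = b
        · subst hcb; omega
        · rw [couple_vv hab hxy hca hcb]
      have hma : m ≠ a := by
        intro hma
        subst hma
        have hmLy := haL hmM
        have h1 := hminy _ hmLy
        have h2 := hminx _ hcLx
        omega
      have hmLy : m ∈ (ξ w).filter Py := (hxyL m hma hmb).1 hmM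
      have hcb : c ≠ b := by
        intro hcb
        subst hcb
        have h1 := hminy _ hmLy
        have h2 := hminx _ hcLx
        have h3 := couple_vv hab hxy hma hmb
        omega
      have hxm : x m = y m := couple_vv hab hxy hma hmb
      have hxc : x c = y c := couple_vv hab hxy hca hcb
      have h1 := hminx _ hcLx
      have h2 := hminy _ hmLy
      have i1 : ((ξ w).filter Px).idxOf m ≤ ((ξ w).filter Px).idxOf c :=
        hidxx c hcLx (by omega)
      have i2 : ((ξ w).filter Py).idxOf c ≤ ((ξ w).filter Py).idxOf m :=
        hidxy m hmLy (by omega)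
      have hnd := (hξ w).1
      have t1 : (ξ w).idxOf m ≤ (ξ w).idxOf c :=
        (idxOf_filter_le_iff' (ξ w) hnd Px m c hmM hcLx).1 i1
      have t2 : (ξ w).idxOf c ≤ (ξ w).idxOf m :=
        (idxOf_filter_le_iff' (ξ w) hnd Py c m hcLy hmLy).1 i2
      have hmc : m = c :=
        (List.idxOf_inj (y := c) (List.mem_of_mem_filter hmM)).1
          (le_antisymm t1 t2)
      refine Or.inr (Or.inr ?_)
      rw [hNx, hNy, hLx, hLy]
      simpa using hmc


include ha hb in
lemma couple_iter (hξ : ∀ v, (ξ v).Nodup ∧ ∀ w, w ∈ ξ v ↔ G.Adj v w) :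
    ∀ (k : ℕ) (w : V) (n m : ℕ), x w + y w ≤ k → x w ≤ n → y w ≤ m →
      lsIter G ξ x n w = b ∨ lsIter G ξ y m w = a ∨
        lsIter G ξ x n w = lsIter G ξ y m w := by
  intro k
  induction k with
  | zero =>
    intro w n m hk hn hm
    have hfx : lsNext G ξ x w = w :=
      lsNext_eq_self G ξ (fun n hadj hlt => by omega)
    have hfy : lsNext G ξ y w = w :=
      lsNext_eq_self G ξ (fun n hadj hlt => by omega)
    exact Or.inr (Or.inr (by rw [lsIter_fixed G ξ hfx, lsIter_fixed G ξ hfy]))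
  | succ k ih =>
    intro w n m hk hn hm
    rcases couple_next G ξ hab hxy ha hb hξ w with h | h | h
    · left
      by_cases hwb : w = b
      · subst hwb
        exact lsIter_fixed G ξ (couple_next_b G ξ hab hxy hb) n
      · have hmove : lsNext G ξ x w ≠ w := by rw [h]; exact Ne.symm hwb
        have hlt := (lsNext_ne_imp G ξ hmove).2.2
        cases n with
        | zero => omega
        | succ n' =>
          have : lsIter G ξ x (n'+1) w = lsIter G ξ x n' (lsNext G ξ x w) := by
            simp [lsIter, hmove]
          rw [this, h]
          exact lsIter_fixed G ξ (couple_next_b G ξ hab hxy hb) n'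
    · right; left
      by_cases hwa : w = a
      · subst hwa
        exact lsIter_fixed G ξ (couple_next_a G ξ hab hxy ha) m
      · have hmove : lsNext G ξ y w ≠ w := by rw [h]; exact Ne.symm hwa
        have hlt := (lsNext_ne_imp G ξ hmove).2.2
        cases m with
        | zero => omega
        | succ m' =>
          have : lsIter G ξ y (m'+1) w = lsIter G ξ y m' (lsNext G ξ y w) := by
            simp [lsIter, hmove]
          rw [this, h]
          exact lsIter_fixed G ξ (couple_next_a G ξ hab hxy ha) m'
    · by_cases hfx : lsNext G ξ x w = w
      · have hfy : lsNext G ξ y w = w := by rw [← h]; exact hfx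
        exact Or.inr (Or.inr (by rw [lsIter_fixed G ξ hfx, lsIter_fixed G ξ hfy]))
      · have hfy : lsNext G ξ y w ≠ w := by rw [← h]; exact hfx
        have hx' := (lsNext_ne_imp G ξ hfx).2.2
        have hy' := (lsNext_ne_imp G ξ hfy).2.2
        cases n with
        | zero => omega
        | succ n' =>
          cases m with
          | zero => omega
          | succ m' =>
            have e1 : lsIter G ξ x (n'+1) w = lsIter G ξ x n' (lsNext G ξ x w) := by
              simp [lsIter, hfx]
            have e2 : lsIter G ξ y (m'+1) w = lsIter G ξ y m' (lsNext G ξ y w) := by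
              simp [lsIter, hfy]
            rw [e1, e2, h]
            have hx2 : x (lsNext G ξ y w) < x w := by rw [← h]; exact hx'
            exact ih (lsNext G ξ y w) n' m' (by omega) (by omega) (by omega)

include ha hb in
lemma couple_place (hξ : ∀ v, (ξ v).Nodup ∧ ∀ w, w ∈ ξ v ↔ G.Adj v w) (u : V) :
    lsPlace G ξ x u = b ∨ lsPlace G ξ y u = a ∨ lsPlace G ξ x u = lsPlace G ξ y u :=
  couple_iter G ξ hab hxy ha hb hξ (x u + y u) u (x u) (y u) le_rfl le_rfl le_rfl

end
end Coupling

/-- The coupling invariant: `y + e_a = x + e_b` where `a` is an almost-local-minimum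
for `x` and `b` is an almost-local-minimum for `y`. -/
def lsRel (G : SimpleGraph V) [DecidableRel G.Adj] (x y : V → ℕ) : Prop :=
  ∃ a b : V,
    (∀ v, y v + (if v = a then 1 else 0) = x v + (if v = b then 1 else 0)) ∧
    (∀ n, G.Adj a n → x a ≤ x n + 1) ∧
    (∀ n, G.Adj b n → y b ≤ y n + 1)

section Main
variable {G : SimpleGraph V} [DecidableRel G.Adj] {ξ : V → List V}

lemma lsRel_base (hξ : ∀ v, (ξ v).Nodup ∧ ∀ w, w ∈ ξ v ↔ G.Adj v w)
    (x : V → ℕ) (c u' : V) :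
    lsRel G (lsAdd G ξ x c) (lsAdd G ξ x u') := by
  refine ⟨lsPlace G ξ x c, lsPlace G ξ x u', fun v => by simp [lsAdd]; omega, ?_, ?_⟩
  · intro n hadj
    have h1 := lsPlace_localMin G ξ hξ hadj
    have h2 : n ≠ lsPlace G ξ x c := hadj.ne'
    simp [lsAdd, h2]
    omega
  · intro n hadj
    have h1 := lsPlace_localMin G ξ hξ hadj
    have h2 : n ≠ lsPlace G ξ x u' := hadj.ne'
    simp [lsAdd, h2]
    omega

lemma lsRel_step (hξ : ∀ v, (ξ v).Nodup ∧ ∀ w, w ∈ ξ v ↔ G.Adj v w)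
    {x y : V → ℕ} (hrel : lsRel G x y) (u : V) :
    lsRel G (lsAdd G ξ x u) (lsAdd G ξ y u) := by
  obtain ⟨a, b, hxy, ha, hb⟩ := hrel
  by_cases hab : a = b
  · have hxyeq : x = y := by
      funext v
      have := hxy v
      subst hab
      omega
    subst hxyeq
    exact lsRel_base hξ x u u
  · rcases couple_place G ξ hab hxy ha hb hξ u with h | h | h
    · -- lsPlace x u = b : new witnesses a, lsPlace y u
      refine ⟨a, lsPlace G ξ y u, fun v => ?_, ?_, ?_⟩
      · have h0 := hxy v
        simp only [lsAdd, h]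
        set i1 := (if v = a then 1 else 0) with hi1
        set i2 := (if v = b then 1 else 0) with hi2
        set i3 := (if v = lsPlace G ξ y u then 1 else 0) with hi3
        clear_value i1 i2 i3
        omega
      · intro n hadj
        have h1 := ha n hadj
        have hna : n ≠ a := hadj.ne'
        simp only [lsAdd]
        have e1 : (if a = lsPlace G ξ x u then 1 else 0) = 0 := by
          rw [h]; simp [hab]
        rw [e1]
        omega
      · intro n hadj
        have h1 := lsPlace_localMin G ξ hξ hadj
        have h2 : n ≠ lsPlace G ξ y u := hadj.ne'
        simp [lsAdd, h2]
        omega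
    · -- lsPlace y u = a : new witnesses lsPlace x u, b
      refine ⟨lsPlace G ξ x u, b, fun v => ?_, ?_, ?_⟩
      · have h0 := hxy v
        simp only [lsAdd, h]
        set i1 := (if v = a then 1 else 0) with hi1
        set i2 := (if v = b then 1 else 0) with hi2
        set i3 := (if v = lsPlace G ξ x u then 1 else 0) with hi3
        clear_value i1 i2 i3
        omega
      · intro n hadj
        have h1 := lsPlace_localMin G ξ hξ hadj
        have h2 : n ≠ lsPlace G ξ x u := hadj.ne'
        simp [lsAdd, h2]
        omega
      · intro n hadj
        have h1 := hb n hadj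
        have hnb : n ≠ b := hadj.ne'
        simp only [lsAdd]
        have e1 : (if b = lsPlace G ξ y u then 1 else 0) = 0 := by
          rw [h]; simp [Ne.symm hab]
        rw [e1]
        omega
    · -- equal placements : keep witnesses a, b
      refine ⟨a, b, fun v => ?_, ?_, ?_⟩
      · have h0 := hxy v
        simp only [lsAdd, h]
        set i1 := (if v = a then 1 else 0) with hi1
        set i2 := (if v = b then 1 else 0) with hi2
        set i3 := (if v = lsPlace G ξ y u then 1 else 0) with hi3
        clear_value i1 i2 i3
        omega
      · intro n hadj
        have h1 := ha n hadj
        have hna : n ≠ a := hadj.ne'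
        simp only [lsAdd]
        by_cases hpa : a = lsPlace G ξ x u
        · have h2 : x a ≤ x n := by
            rw [hpa]
            exact lsPlace_localMin G ξ hξ (hpa ▸ hadj)
          have : (if n = lsPlace G ξ x u then 1 else 0) ≤ 1 := by split <;> omega
          simp only [if_pos hpa]
          omega
        · simp only [if_neg hpa]
          have : (0:ℕ) ≤ (if n = lsPlace G ξ x u then 1 else 0) := by omega
          omega
      · intro n hadj
        have h1 := hb n hadj
        have hnb : n ≠ b := hadj.ne'
        simp only [lsAdd]
        by_cases hpb : b = lsPlace G ξ y u
        · have h2 : y b ≤ y n := by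
            rw [hpb]
            exact lsPlace_localMin G ξ hξ (hpb ▸ hadj)
          simp only [if_pos hpb]
          have : (if n = lsPlace G ξ y u then 1 else 0) ≤ 1 := by split <;> omega
          omega
        · simp only [if_neg hpb]
          omega

lemma lsRel_foldl (hξ : ∀ v, (ξ v).Nodup ∧ ∀ w, w ∈ ξ v ↔ G.Adj v w) :
    ∀ (l : List V) {x y : V → ℕ}, lsRel G x y →
      lsRel G (l.foldl (lsAdd G ξ) x) (l.foldl (lsAdd G ξ) y) := by
  intro l
  induction l with
  | nil => intro x y h; exact h
  | cons c t ih =>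
    intro x y h
    exact ih (lsRel_step hξ h c)

lemma lsRel_set (hξ : ∀ v, (ξ v).Nodup ∧ ∀ w, w ∈ ξ v ↔ G.Adj v w) :
    ∀ (l : List V) (x : V → ℕ) (i : ℕ) (u' : V), i < l.length →
      lsRel G (l.foldl (lsAdd G ξ) x) ((l.set i u').foldl (lsAdd G ξ) x) := by
  intro l
  induction l with
  | nil => intro x i u' hi; simp at hi
  | cons c t ih =>
    intro x i u' hi
    cases i with
    | zero =>
      simp only [List.set_cons_zero, List.foldl_cons]
      exact lsRel_foldl hξ t (lsRel_base hξ x c u')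
    | succ j =>
      simp only [List.set_cons_succ, List.foldl_cons]
      exact ih (lsAdd G ξ x c) j u' (by simpa using hi)

/-- **Lipschitz property of local search allocation.**
With a fixed deterministic tie-breaking rule `ξ` (a permutation of the neighbors
of each vertex), changing the birthplace of a single ball changes the resulting
load vector by at most `2` in `ℓ¹`-norm. -/
theorem lsLoads_lipschitz (G : SimpleGraph V) [DecidableRel G.Adj]
    (ξ : V → List V)
    (hξ : ∀ v, (ξ v).Nodup ∧ ∀ w, w ∈ ξ v ↔ G.Adj v w)
    (bs : List V) (i : ℕ) (hi : i < bs.length) (u' : V) :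
    ∑ v, |(lsLoads G ξ bs v : ℤ) - (lsLoads G ξ (bs.set i u') v : ℤ)| ≤ 2 := by
  obtain ⟨a, b, hxy, -, -⟩ := lsRel_set hξ bs (fun _ => 0) i u' hi
  have key : ∀ v, |(lsLoads G ξ bs v : ℤ) - (lsLoads G ξ (bs.set i u') v : ℤ)| ≤
      (if v = a then 1 else 0) + (if v = b then 1 else 0) := by
    intro v
    have hz : (lsLoads G ξ (bs.set i u') v : ℤ) + (if v = a then 1 else 0) =
        (lsLoads G ξ bs v : ℤ) + (if v = b then 1 else 0) := by
      exact_mod_cast hxy v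
    have e1 : (lsLoads G ξ bs v : ℤ) - (lsLoads G ξ (bs.set i u') v : ℤ) =
        (if v = a then (1:ℤ) else 0) - (if v = b then 1 else 0) := by linarith
    rw [e1]
    refine le_trans (abs_sub _ _) ?_
    rw [abs_of_nonneg (by positivity), abs_of_nonneg (by positivity)]
  calc ∑ v, |(lsLoads G ξ bs v : ℤ) - (lsLoads G ξ (bs.set i u') v : ℤ)|
      ≤ ∑ v : V, ((if v = a then 1 else 0) + (if v = b then (1:ℤ) else 0)) :=
        Finset.sum_le_sum (fun v _ => key v)
    _ = 2 := by
        rw [Finset.sum_add_distrib]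
        simp [Finset.sum_ite_eq']
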